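/- Fix a training data set (E, λ) over d features and a decision tree T, and let x₀ ∈ ℝ be smaller than every feature value of every example. For a leaf v, Q[v, (l_i, r_i), k′] equals min(|{e ∈ E[(l_i, r_i)] : λ(e) = blue}|, |{e ∈ E[(l_i, r_i)] : λ(e) = red}|). For a cut v of T with feature j = feat(v), left child w and right child u, Q[v, (l_i, r_i), k′] equals the minimum of: (a) the minimum over β ∈ {0, …, k′} of Q[w, L(thr(v)), β] + Q[u, R(thr(v)), k′ − β]; and (b) if k′ ≥ 1, the minimum over β ∈ {0, …, k′ − 1} and x ∈ {e[j] : e ∈ E} ∪ {x₀} of Q[w, L(x), β] + Q[u, R(x), k′ − β − 1]; here L(x) denotes the threshold sequence obtained from (l_i, r_i) by replacing the j-th interval with (l_j, min(r_j, x)], and R(x) the one obtained by replacing the j-th interval with (max(l_j, x), r_j]. -/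

import Mathlib

/-- The two class labels. -/
def blue : Bool := true

def red : Bool := false

/-- Decision trees with features of type `α`: each leaf carries a class label,
each internal node (a *cut*) carries a feature and a real threshold. -/
inductive DTree (α : Type) : Type
  | leaf (label : Bool) : DTree α
  | node (feat : α) (thr : ℝ) (left right : DTree α) : DTree α

namespace DTree

/-- The class that the tree assigns to the example `e`. -/
noncomputable def classify {α : Type} : DTree α → (α → ℝ) → Bool
  | leaf c, _ => c
  | node f x l r, e => if e f ≤ x then l.classify e else r.classify e

end DTree

/-- `T'` has the same shape as `T` and the same feature at every cut; thresholds and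
leaf labels may differ. -/
def SameShapeFeat {α : Type} : DTree α → DTree α → Prop
  | DTree.leaf _, DTree.leaf _ => True
  | DTree.node f _ l r, DTree.node f' _ l' r' =>
      f = f' ∧ SameShapeFeat l l' ∧ SameShapeFeat r r'
  | _, _ => False

/-- The number of cuts at which the thresholds of the two (same-shaped) trees
differ, i.e. the number of threshold adjustments performed. -/
noncomputable def adjCost {α : Type} : DTree α → DTree α → ℕ
  | DTree.node _ x l r, DTree.node _ x' l' r' =>
      (if x = x' then 0 else 1) + adjCost l l' + adjCost r r'
  | _, _ => 0

open Classical in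
/-- The box `E[(l_i, r_i)]` of a threshold sequence: the examples `e` with
`l i < e i ≤ r i` for every feature `i`. -/
noncomputable def box {d n : ℕ} (E : Fin n → Fin d → ℝ) (l r : Fin d → EReal) :
    Finset (Fin n) :=
  Finset.univ.filter
    (fun i => ∀ a : Fin d, l a < ((E i a : ℝ) : EReal) ∧ ((E i a : ℝ) : EReal) ≤ r a)

/-- Errors of `T` among the examples indexed by `S`. -/
noncomputable def errorCountOn {d n : ℕ} (E : Fin n → Fin d → ℝ)
    (lab : Fin n → Bool) (S : Finset (Fin n)) (T : DTree (Fin d)) : ℕ :=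
  (S.filter (fun i => T.classify (E i) ≠ lab i)).card

/-- `Q E lab T l r k'`: the minimum number of errors, on the family `E[(l, r)]`, of a
decision tree obtained from the subtree `T` by replacing the thresholds of at most `k'`
of its cuts by arbitrary real numbers and relabeling its leaves arbitrarily. -/
noncomputable def Q {d n : ℕ} (E : Fin n → Fin d → ℝ) (lab : Fin n → Bool)
    (T : DTree (Fin d)) (l r : Fin d → EReal) (k' : ℕ) : ℕ :=
  sInf {m : ℕ | ∃ T' : DTree (Fin d), SameShapeFeat T T' ∧ adjCost T T' ≤ k' ∧
    errorCountOn E lab (box E l r) T' = m}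

open Classical

lemma sameShapeFeat_refl {α : Type} (T : DTree α) : SameShapeFeat T T := by
  induction T with
  | leaf c => trivial
  | node f x l r ihl ihr => exact ⟨rfl, ihl, ihr⟩

lemma adjCost_self {α : Type} (T : DTree α) : adjCost T T = 0 := by
  induction T with
  | leaf c => rfl
  | node f x l r ihl ihr => simp [adjCost, ihl, ihr]

lemma Q_spec {d n : ℕ} (E : Fin n → Fin d → ℝ) (lab : Fin n → Bool)
    (T : DTree (Fin d)) (l r : Fin d → EReal) (k' : ℕ) :
    ∃ T', SameShapeFeat T T' ∧ adjCost T T' ≤ k' ∧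
      errorCountOn E lab (box E l r) T' = Q E lab T l r k' := by
  have h := Nat.sInf_mem (s := {m : ℕ | ∃ T' : DTree (Fin d), SameShapeFeat T T' ∧
      adjCost T T' ≤ k' ∧ errorCountOn E lab (box E l r) T' = m})
      ⟨_, T, sameShapeFeat_refl T, by simp [adjCost_self], rfl⟩
  exact h

lemma Q_le {d n : ℕ} (E : Fin n → Fin d → ℝ) (lab : Fin n → Bool)
    (T T' : DTree (Fin d)) (l r : Fin d → EReal) (k' : ℕ)
    (h1 : SameShapeFeat T T') (h2 : adjCost T T' ≤ k') :
    Q E lab T l r k' ≤ errorCountOn E lab (box E l r) T' :=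
  Nat.sInf_le ⟨T', h1, h2, rfl⟩

lemma box_update_min {d n : ℕ} (E : Fin n → Fin d → ℝ) (l r : Fin d → EReal)
    (j : Fin d) (c : ℝ) :
    box E l (Function.update r j (min (r j) ((c : ℝ) : EReal))) =
      (box E l r).filter (fun i => E i j ≤ c) := by
  ext i
  simp only [box, Finset.mem_filter, Finset.mem_univ, true_and]
  constructor
  · intro h
    have hj := h j
    rw [Function.update_self] at hj
    refine ⟨fun a => ?_, ?_⟩
    · rcases eq_or_ne a j with rfl | ha
      · exact ⟨hj.1, hj.2.trans (min_le_left _ _)⟩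
      · have := h a; rwa [Function.update_of_ne ha] at this
    · exact_mod_cast hj.2.trans (min_le_right _ _)
  · rintro ⟨h, hc⟩
    intro a
    rcases eq_or_ne a j with rfl | ha
    · rw [Function.update_self]
      exact ⟨(h a).1, le_min (h a).2 (by exact_mod_cast hc)⟩
    · rw [Function.update_of_ne ha]; exact h a

lemma box_update_max {d n : ℕ} (E : Fin n → Fin d → ℝ) (l r : Fin d → EReal)
    (j : Fin d) (c : ℝ) :
    box E (Function.update l j (max (l j) ((c : ℝ) : EReal))) r =
      (box E l r).filter (fun i => ¬ E i j ≤ c) := by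
  ext i
  simp only [box, Finset.mem_filter, Finset.mem_univ, true_and, not_le]
  constructor
  · intro h
    have hj := h j
    rw [Function.update_self] at hj
    have hmax := max_lt_iff.mp hj.1
    refine ⟨fun a => ?_, ?_⟩
    · rcases eq_or_ne a j with rfl | ha
      · exact ⟨hmax.1, hj.2⟩
      · have := h a; rwa [Function.update_of_ne ha] at this
    · exact_mod_cast hmax.2
  · rintro ⟨h, hc⟩
    intro a
    rcases eq_or_ne a j with rfl | ha
    · rw [Function.update_self]
      exact ⟨max_lt (h a).1 (by exact_mod_cast hc), (h a).2⟩
    · rw [Function.update_of_ne ha]; exact h a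

lemma errorCountOn_leaf {d n : ℕ} (E : Fin n → Fin d → ℝ) (lab : Fin n → Bool)
    (S : Finset (Fin n)) (b : Bool) :
    errorCountOn E lab S (DTree.leaf b) = (S.filter fun i => lab i = !b).card := by
  unfold errorCountOn
  congr 1
  apply Finset.filter_congr
  intro i _
  cases h : lab i <;> cases b <;> simp [DTree.classify, h]

lemma errorCountOn_node {d n : ℕ} (E : Fin n → Fin d → ℝ) (lab : Fin n → Bool)
    (S : Finset (Fin n)) (j : Fin d) (c : ℝ) (w u : DTree (Fin d)) :
    errorCountOn E lab S (DTree.node j c w u) =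
      errorCountOn E lab (S.filter fun i => E i j ≤ c) w
        + errorCountOn E lab (S.filter fun i => ¬ E i j ≤ c) u := by
  unfold errorCountOn
  rw [← Finset.card_filter_add_card_filter_not
      (s := S.filter (fun i => DTree.classify (DTree.node j c w u) (E i) ≠ lab i))
      (p := fun i => E i j ≤ c)]
  congr 1
  · rw [Finset.filter_filter, Finset.filter_filter]
    congr 1
    apply Finset.filter_congr
    intro i _
    simp only [DTree.classify]
    constructor
    · rintro ⟨hP, hq⟩; exact ⟨hq, by rwa [if_pos hq] at hP⟩
    · rintro ⟨hq, hP⟩; exact ⟨by rwa [if_pos hq], hq⟩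
  · rw [Finset.filter_filter, Finset.filter_filter]
    congr 1
    apply Finset.filter_congr
    intro i _
    simp only [DTree.classify]
    constructor
    · rintro ⟨hP, hq⟩; exact ⟨hq, by rwa [if_neg hq] at hP⟩
    · rintro ⟨hq, hP⟩; exact ⟨by rwa [if_neg hq], hq⟩

/-- The dynamic-programming recurrence for `Q`. For a leaf, `Q` is the
minimum of the numbers of blue and red examples in the box. For a cut with feature `j`,
threshold `x`, left child `w` and right child `u`, `Q` is the minimum of (a) splitting
the budget while keeping the threshold `x`, and (b) (if `k' ≥ 1`) splitting the budget
and adjusting the threshold to some value in `{e j : e ∈ E} ∪ {x₀}`; the left child is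
evaluated on the box with `r j` replaced by `min (r j) x`, and the right child on the
box with `l j` replaced by `max (l j) x`. -/
theorem stmt8 {d n : ℕ} (E : Fin n → Fin d → ℝ) (lab : Fin n → Bool)
    (x₀ : ℝ) (hx₀ : ∀ (i : Fin n) (j : Fin d), x₀ < E i j)
    (l r : Fin d → EReal) (hlr : ∀ a : Fin d, l a ≤ r a) (k' : ℕ) :
    (∀ c : Bool, Q E lab (DTree.leaf c) l r k' =
      min ((box E l r).filter (fun i => lab i = blue)).card
        ((box E l r).filter (fun i => lab i = red)).card) ∧
    (∀ (j : Fin d) (x : ℝ) (w u : DTree (Fin d)),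
      Q E lab (DTree.node j x w u) l r k' =
        sInf (
          {m : ℕ | ∃ β ≤ k',
            m = Q E lab w l (Function.update r j (min (r j) ((x : ℝ) : EReal))) β
              + Q E lab u (Function.update l j (max (l j) ((x : ℝ) : EReal))) r
                  (k' - β)}
          ∪ {m : ℕ | ∃ β, β + 1 ≤ k' ∧
            ∃ y ∈ insert x₀ (Finset.univ.image (fun i : Fin n => E i j)),
              m = Q E lab w l (Function.update r j (min (r j) ((y : ℝ) : EReal))) β
                + Q E lab u (Function.update l j (max (l j) ((y : ℝ) : EReal))) r
                    (k' - β - 1)})) := by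
  constructor
  · -- leaf case
    intro c
    apply le_antisymm
    · apply le_min
      · have h := Q_le E lab (DTree.leaf c) (DTree.leaf red) l r k' trivial (Nat.zero_le k')
        rw [errorCountOn_leaf] at h
        exact le_of_le_of_eq h (by congr 1)
      · have h := Q_le E lab (DTree.leaf c) (DTree.leaf blue) l r k' trivial (Nat.zero_le k')
        rw [errorCountOn_leaf] at h
        exact le_of_le_of_eq h (by congr 1)
    · obtain ⟨T', hs, _, he⟩ := Q_spec E lab (DTree.leaf c) l r k'
      cases T' with
      | node _ _ _ _ => exact hs.elim
      | leaf b =>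
        rw [errorCountOn_leaf] at he
        cases b
        · rw [← he]
          exact le_trans (min_le_left _ _) (le_of_eq (by congr 1))
        · rw [← he]
          exact le_trans (min_le_right _ _) (le_of_eq (by congr 1))
  · -- node case
    intro j x w u
    apply le_antisymm
    · -- Q ≤ sInf of the union
      have hBne : ({m : ℕ | ∃ β ≤ k',
            m = Q E lab w l (Function.update r j (min (r j) ((x : ℝ) : EReal))) β
              + Q E lab u (Function.update l j (max (l j) ((x : ℝ) : EReal))) r
                  (k' - β)}
          ∪ {m : ℕ | ∃ β, β + 1 ≤ k' ∧
            ∃ y ∈ insert x₀ (Finset.univ.image (fun i : Fin n => E i j)),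
              m = Q E lab w l (Function.update r j (min (r j) ((y : ℝ) : EReal))) β
                + Q E lab u (Function.update l j (max (l j) ((y : ℝ) : EReal))) r
                    (k' - β - 1)}).Nonempty :=
        ⟨_, Set.mem_union_left _ ⟨0, Nat.zero_le _, rfl⟩⟩
      have hmem := Nat.sInf_mem hBne
      rw [Set.mem_union] at hmem
      rcases hmem with ⟨β, hβ, heq⟩ | ⟨β, hβ, y, hy, heq⟩
      · obtain ⟨w', hsw, hcw, hew⟩ :=
          Q_spec E lab w l (Function.update r j (min (r j) ((x : ℝ) : EReal))) β
        obtain ⟨u', hsu, hcu, heu⟩ :=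
          Q_spec E lab u (Function.update l j (max (l j) ((x : ℝ) : EReal))) r (k' - β)
        rw [heq, ← hew, ← heu, box_update_min, box_update_max]
        have hle := Q_le E lab (DTree.node j x w u) (DTree.node j x w' u') l r k'
          ⟨rfl, hsw, hsu⟩ (by simp [adjCost]; omega)
        rwa [errorCountOn_node] at hle
      · obtain ⟨w', hsw, hcw, hew⟩ :=
          Q_spec E lab w l (Function.update r j (min (r j) ((y : ℝ) : EReal))) β
        obtain ⟨u', hsu, hcu, heu⟩ :=
          Q_spec E lab u (Function.update l j (max (l j) ((y : ℝ) : EReal))) r (k' - β - 1)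
        rw [heq, ← hew, ← heu, box_update_min, box_update_max]
        have hle := Q_le E lab (DTree.node j x w u) (DTree.node j y w' u') l r k'
          ⟨rfl, hsw, hsu⟩ (by simp only [adjCost]; split_ifs <;> omega)
        rwa [errorCountOn_node] at hle
    · -- sInf of the union ≤ Q
      obtain ⟨T', hs, hc, he⟩ := Q_spec E lab (DTree.node j x w u) l r k'
      cases T' with
      | leaf b => exact hs.elim
      | node j' x' w' u' =>
        obtain ⟨hj, hsw, hsu⟩ := hs
        subst hj
        rw [errorCountOn_node] at he
        have hcost : (if x = x' then 0 else 1) + adjCost w w' + adjCost u u' ≤ k' := hc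
        by_cases hxx : x = x'
        · subst hxx
          rw [if_pos rfl] at hcost
          rw [← box_update_min E l r j x, ← box_update_max E l r j x] at he
          refine le_trans (Nat.sInf_le (Set.mem_union_left _
            ⟨adjCost w w', by omega, rfl⟩)) ?_
          rw [← he]
          exact add_le_add
            (Q_le E lab w w' l _ (adjCost w w') hsw le_rfl)
            (Q_le E lab u u' _ r (k' - adjCost w w') hsu (by omega))
        · rw [if_neg hxx] at hcost
          obtain ⟨y, hy_mem, hiff⟩ : ∃ y ∈ insert x₀ (Finset.univ.image fun i : Fin n => E i j),
              ∀ i, E i j ≤ y ↔ E i j ≤ x' := by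
            by_cases hSne :
                ((Finset.univ.image fun i : Fin n => E i j).filter (fun z => z ≤ x')).Nonempty
            · refine ⟨Finset.max' _ hSne, ?_, fun i => ?_⟩
              · have hm := Finset.max'_mem _ hSne
                rw [Finset.mem_filter] at hm
                exact Finset.mem_insert_of_mem hm.1
              · have hm := Finset.max'_mem _ hSne
                rw [Finset.mem_filter] at hm
                constructor
                · exact fun h => h.trans hm.2
                · intro h
                  exact Finset.le_max' _ _ (Finset.mem_filter.mpr
                    ⟨Finset.mem_image_of_mem (fun i : Fin n => E i j) (Finset.mem_univ i), by simpa using h⟩)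
            · refine ⟨x₀, Finset.mem_insert_self _ _, fun i => ?_⟩
              constructor
              · intro h; exact absurd (hx₀ i j) (not_lt.mpr h)
              · intro h
                exact absurd ⟨E i j, Finset.mem_filter.mpr
                  ⟨Finset.mem_image_of_mem (fun i : Fin n => E i j) (Finset.mem_univ i), by simpa using h⟩⟩ hSne
          have hboxL : (box E l r).filter (fun i => E i j ≤ y)
              = (box E l r).filter (fun i => E i j ≤ x') :=
            Finset.filter_congr fun i _ => hiff i
          have hboxR : (box E l r).filter (fun i => ¬ E i j ≤ y)
              = (box E l r).filter (fun i => ¬ E i j ≤ x') :=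
            Finset.filter_congr fun i _ => not_congr (hiff i)
          refine le_trans (Nat.sInf_le (Set.mem_union_right _
            ⟨adjCost w w', by omega, y, hy_mem, rfl⟩)) ?_
          rw [← he]
          apply add_le_add
          · have h := Q_le E lab w w' l
              (Function.update r j (min (r j) ((y : ℝ) : EReal))) (adjCost w w') hsw le_rfl
            rwa [box_update_min, hboxL] at h
          · have h := Q_le E lab u u'
              (Function.update l j (max (l j) ((y : ℝ) : EReal))) r
              (k' - adjCost w w' - 1) hsu (by omega)
            rwa [box_update_max, hboxR] at h
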